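/- arXiv:0909.3907 — 2 statements merged into one kernel-verified Lean document; each statement's English description precedes it below -/
import Mathlib

section
/- Let E = (1/n) Σ_{i,j=1}^n |e_i⟩⟨e_j| ⊗ |e_i⟩⟨e_j| ∈ L(H_n ⊗ H_n) be the projection onto the maximally entangled state. Then ‖E‖_{S(k)} = k/n for all 1 ≤ k ≤ n. -/
noncomputable section
open scoped BigOperators

/-- Inner product (conjugate-linear in the first argument). -/
def ip {ι : Type*} [Fintype ι] (w v : ι → ℂ) : ℂ := ∑ p, star (w p) * v p

/-- Euclidean norm. -/
def nrm {ι : Type*} [Fintype ι] (v : ι → ℂ) : ℝ := Real.sqrt (ip v v).re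

/-- Elementary tensor (product vector). -/
def prodVec {n m : ℕ} (a : Fin n → ℂ) (b : Fin m → ℂ) : Fin n × Fin m → ℂ :=
  fun p => a p.1 * b p.2

/-- Schmidt rank at most `k`: `v` is a sum of `k` product vectors. -/
def SRle {n m : ℕ} (k : ℕ) (v : Fin n × Fin m → ℂ) : Prop :=
  ∃ (a : Fin k → Fin n → ℂ) (b : Fin k → Fin m → ℂ), v = ∑ i, prodVec (a i) (b i)

/-- The `k`-th vector norm. -/
def vecNorm {n m : ℕ} (k : ℕ) (v : Fin n × Fin m → ℂ) : ℝ :=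
  sSup {r | ∃ w, nrm w = 1 ∧ SRle k w ∧ r = ‖ip w v‖}

/-- The `k`-th operator norm. -/
def opNorm {n m : ℕ} (k : ℕ) (X : Matrix (Fin n × Fin m) (Fin n × Fin m) ℂ) : ℝ :=
  sSup {r | ∃ v w, nrm v = 1 ∧ nrm w = 1 ∧ SRle k v ∧ SRle k w ∧
    r = ‖ip w (X.mulVec v)‖}

/-- Rank-one operator `|w⟩⟨v|`. -/
def outer {ι : Type*} (w v : ι → ℂ) : Matrix ι ι ℂ := Matrix.of fun p q => w p * star (v q)

/-- `k`-block positivity. -/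
def BlockPos {n m : ℕ} (k : ℕ) (Y : Matrix (Fin n × Fin m) (Fin n × Fin m) ℂ) : Prop :=
  ∀ v : Fin n × Fin m → ℂ, nrm v = 1 → SRle k v → 0 ≤ (ip v (Y.mulVec v)).re

/-- Schmidt number at most `k`. -/
def SNle {n m : ℕ} (k : ℕ) (ρ : Matrix (Fin n × Fin m) (Fin n × Fin m) ℂ) : Prop :=
  ∃ (N : ℕ) (p : Fin N → ℝ) (v : Fin N → Fin n × Fin m → ℂ),
    (∀ i, 0 ≤ p i) ∧ (∑ i, p i) = 1 ∧ (∀ i, nrm (v i) = 1) ∧ (∀ i, SRle k (v i)) ∧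
    ρ = ∑ i, (p i : ℂ) • outer (v i) (v i)


section helpers
variable {ι : Type*} [Fintype ι]

lemma ip_eq_inner (w v : ι → ℂ) :
    ip w v = @inner ℂ (EuclideanSpace ℂ ι) _ (WithLp.toLp 2 w) (WithLp.toLp 2 v) := by
  simp [ip, PiLp.inner_apply, RCLike.inner_apply, mul_comm]

lemma ip_self_re (v : ι → ℂ) : (ip v v).re = ∑ p, Complex.normSq (v p) := by
  have : ip v v = ((∑ p, Complex.normSq (v p) : ℝ) : ℂ) := by
    rw [ip]; push_cast
    exact Finset.sum_congr rfl fun p _ => by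
      rw [Complex.normSq_eq_conj_mul_self]; rfl
  rw [this, Complex.ofReal_re]

lemma ip_self_re_nonneg (v : ι → ℂ) : 0 ≤ (ip v v).re := by
  rw [ip_self_re]; exact Finset.sum_nonneg fun p _ => Complex.normSq_nonneg _

lemma nrm_nonneg (v : ι → ℂ) : 0 ≤ nrm v := Real.sqrt_nonneg _

lemma nrm_sq (v : ι → ℂ) : nrm v ^ 2 = (ip v v).re := by
  rw [nrm, Real.sq_sqrt (ip_self_re_nonneg v)]

lemma nrm_eq_norm (v : ι → ℂ) : nrm v = @norm (EuclideanSpace ℂ ι) _ (WithLp.toLp 2 v) := by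
  rw [nrm, EuclideanSpace.norm_eq, ip_self_re]
  congr 1
  exact Finset.sum_congr rfl fun p _ => by
    rw [Complex.normSq_eq_norm_sq]

lemma abs_ip_le (w v : ι → ℂ) : ‖ip w v‖ ≤ nrm w * nrm v := by
  rw [ip_eq_inner, nrm_eq_norm, nrm_eq_norm]
  exact norm_inner_le_norm _ _

lemma ip_sum_left {κ : Type*} [Fintype κ] (f : κ → ι → ℂ) (v : ι → ℂ) :
    ip (∑ t, f t) v = ∑ t, ip (f t) v := by
  simp only [ip, Finset.sum_apply, star_sum, Finset.sum_mul]
  exact Finset.sum_comm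

lemma ip_sum_right {κ : Type*} [Fintype κ] (f : κ → ι → ℂ) (v : ι → ℂ) :
    ip v (∑ t, f t) = ∑ t, ip v (f t) := by
  simp only [ip, Finset.sum_apply, Finset.mul_sum]
  exact Finset.sum_comm

end helpers

lemma ip_prodVec {n m : ℕ} (a a' : Fin n → ℂ) (b b' : Fin m → ℂ) :
    ip (prodVec a b) (prodVec a' b') = ip a a' * ip b b' := by
  simp only [ip, prodVec]
  rw [Finset.sum_mul_sum, Fintype.sum_prod_type]
  exact Finset.sum_congr rfl fun i _ => Finset.sum_congr rfl fun j _ => by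
    simp only [star_mul']
    ring

lemma trace_bound {n k : ℕ} (v : Fin n × Fin n → ℂ) (h : SRle k v) :
    ‖∑ i, v (i, i)‖ ≤ Real.sqrt k * nrm v := by
  classical
  obtain ⟨a, b, rfl⟩ := h
  set S : Submodule ℂ (EuclideanSpace ℂ (Fin n)) :=
    Submodule.span ℂ (Set.range (fun t => (WithLp.toLp 2 (a t) : EuclideanSpace ℂ (Fin n)))) with hSdef
  have hd : Module.finrank ℂ S ≤ k := by
    have h := finrank_range_le_card (R := ℂ) (fun t => (WithLp.toLp 2 (a t) : EuclideanSpace ℂ (Fin n)))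
    simpa [Set.finrank, hSdef] using h
  set d := Module.finrank ℂ S with hddef
  let u : OrthonormalBasis (Fin d) ℂ S := stdOrthonormalBasis ℂ S
  set U : Fin d → (Fin n → ℂ) := fun s => (u s : EuclideanSpace ℂ (Fin n)).ofLp with hUdef
  have hU : Orthonormal ℂ (E := EuclideanSpace ℂ (Fin n)) (fun s => (u s : EuclideanSpace ℂ (Fin n))) :=
    u.orthonormal.comp_linearIsometry S.subtypeₗᵢ
  have hUite : ∀ s s', ip (U s) (U s') = if s = s' then 1 else 0 := by
    intro s s'
    rw [ip_eq_inner]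
    exact orthonormal_iff_ite.mp hU s s'
  have hUnrm : ∀ s, nrm (U s) = 1 := by
    intro s
    rw [nrm_eq_norm]
    exact hU.1 s
  -- expansion of a t in the basis
  set c : Fin k → Fin d → ℂ := fun t s => ip (U s) (a t) with hcdef
  have ha : ∀ t i, a t i = ∑ s, c t s * U s i := by
    intro t i
    have hmem : (WithLp.toLp 2 (a t) : EuclideanSpace ℂ (Fin n)) ∈ S := Submodule.subset_span ⟨t, rfl⟩
    have h1 := u.sum_repr ⟨WithLp.toLp 2 (a t), hmem⟩
    have h2 : ((∑ s, u.repr ⟨WithLp.toLp 2 (a t), hmem⟩ s • u s : S) : EuclideanSpace ℂ (Fin n)) = WithLp.toLp 2 (a t) := by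
      rw [h1]
    have h3 : ∀ s, u.repr ⟨WithLp.toLp 2 (a t), hmem⟩ s = c t s := by
      intro s
      rw [u.repr_apply_apply, Submodule.coe_inner]
      exact (ip_eq_inner (U s) (a t)).symm
    calc a t i = ((∑ s, u.repr ⟨WithLp.toLp 2 (a t), hmem⟩ s • u s : S) : EuclideanSpace ℂ (Fin n)) i := by
          rw [h2]
      _ = ∑ s, u.repr ⟨WithLp.toLp 2 (a t), hmem⟩ s * U s i := by
          push_cast
          simp [hUdef]
      _ = ∑ s, c t s * U s i := by simp_rw [h3]
  set b' : Fin d → Fin n → ℂ := fun s j => ∑ t, c t s * b t j with hb'def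
  have hv : (∑ t, prodVec (a t) (b t)) = ∑ s, prodVec (U s) (b' s) := by
    funext p
    simp only [Finset.sum_apply, prodVec, hb'def]
    calc (∑ t, a t p.1 * b t p.2) = ∑ t, (∑ s, c t s * U s p.1) * b t p.2 := by
          exact Finset.sum_congr rfl fun t _ => by rw [← ha t p.1]
      _ = ∑ t, ∑ s, c t s * U s p.1 * b t p.2 := by simp_rw [Finset.sum_mul]
      _ = ∑ s, ∑ t, c t s * U s p.1 * b t p.2 := Finset.sum_comm
      _ = ∑ s, U s p.1 * ∑ t, c t s * b t p.2 := by
          refine Finset.sum_congr rfl fun s _ => ?_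
          rw [Finset.mul_sum]
          exact Finset.sum_congr rfl fun t _ => by ring
  rw [hv]
  set w : Fin n × Fin n → ℂ := ∑ s, prodVec (U s) (b' s) with hwdef
  -- trace
  have htr : (∑ i, w (i, i)) = ∑ s, ip (fun i => star (U s i)) (b' s) := by
    rw [hwdef]
    simp only [Finset.sum_apply, prodVec, ip, star_star]
    exact Finset.sum_comm
  -- norm
  have hww : (ip w w).re = ∑ s, nrm (b' s) ^ 2 := by
    rw [hwdef, ip_sum_left]
    have : ∀ s, ip (prodVec (U s) (b' s)) (∑ s', prodVec (U s') (b' s')) = ip (b' s) (b' s) := by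
      intro s
      rw [ip_sum_right]
      have : ∀ s', ip (prodVec (U s) (b' s)) (prodVec (U s') (b' s'))
          = if s = s' then ip (b' s) (b' s') else 0 := by
        intro s'
        rw [ip_prodVec, hUite]
        split_ifs <;> simp
      simp_rw [this, Finset.sum_ite_eq, Finset.mem_univ, if_pos]
    simp_rw [this]
    rw [Complex.re_sum]
    exact Finset.sum_congr rfl fun s _ => (nrm_sq _).symm
  have hstar : ∀ s, nrm (fun i => star (U s i)) = 1 := by
    intro s
    have : (ip (fun i => star (U s i)) (fun i => star (U s i))).re = (ip (U s) (U s)).re := by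
      rw [ip_self_re, ip_self_re]
      exact Finset.sum_congr rfl fun i _ => by simp [Complex.normSq_conj]
    rw [nrm, this, ← nrm, hUnrm]
  -- chain
  have step1 : ‖∑ i, w (i, i)‖ ≤ ∑ s, nrm (b' s) := by
    rw [htr]
    refine (norm_sum_le _ _).trans ?_
    refine Finset.sum_le_sum fun s _ => ?_
    calc ‖ip (fun i => star (U s i)) (b' s)‖
        ≤ nrm (fun i => star (U s i)) * nrm (b' s) := abs_ip_le _ _
      _ = nrm (b' s) := by rw [hstar s, one_mul]
  have step2 : (∑ s, nrm (b' s)) ≤ Real.sqrt k * nrm w := by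
    have cs : (∑ s, nrm (b' s)) ^ 2 ≤ (d : ℝ) * ∑ s, nrm (b' s) ^ 2 := by
      have := Finset.sum_mul_sq_le_sq_mul_sq Finset.univ (fun _ : Fin d => (1 : ℝ))
        (fun s => nrm (b' s))
      simpa using this
    have hnn : 0 ≤ ∑ s, nrm (b' s) := Finset.sum_nonneg fun s _ => nrm_nonneg _
    have h1 : (∑ s, nrm (b' s)) ≤ Real.sqrt ((d : ℝ) * ∑ s, nrm (b' s) ^ 2) := by
      rw [Real.le_sqrt hnn (by positivity)]
      exact cs
    refine h1.trans ?_
    rw [Real.sqrt_mul (Nat.cast_nonneg d)]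
    have h2 : Real.sqrt (d : ℝ) ≤ Real.sqrt (k : ℝ) :=
      Real.sqrt_le_sqrt (by exact_mod_cast hd)
    have h3 : Real.sqrt (∑ s, nrm (b' s) ^ 2) = nrm w := by
      rw [← hww, ← nrm]
    rw [h3]
    exact mul_le_mul_of_nonneg_right h2 (nrm_nonneg _)
  exact step1.trans step2

lemma hform {n : ℕ} (v w : Fin n × Fin n → ℂ) :
    ip w ((Matrix.of fun p q : Fin n × Fin n =>
        if p.1 = p.2 ∧ q.1 = q.2 then (1 : ℂ) / n else 0).mulVec v)
      = (1 / n : ℂ) * star (∑ i, w (i, i)) * (∑ j, v (j, j)) := by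
  classical
  simp only [ip, Matrix.mulVec, dotProduct, Matrix.of_apply]
  have inner_eq : ∀ p : Fin n × Fin n,
      (∑ q : Fin n × Fin n, (if p.1 = p.2 ∧ q.1 = q.2 then (1:ℂ)/n else 0) * v q)
        = if p.1 = p.2 then (1/n : ℂ) * ∑ j, v (j, j) else 0 := by
    intro p
    by_cases h : p.1 = p.2
    · simp only [h, true_and, if_pos]
      rw [Fintype.sum_prod_type]
      have hj : ∀ j : Fin n, (∑ j' : Fin n, (if j = j' then (1:ℂ)/n else 0) * v (j, j'))
          = (1/n : ℂ) * v (j, j) := by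
        intro j
        rw [Finset.sum_eq_single j]
        · rw [if_pos rfl]
        · intro j' _ hne
          rw [if_neg (Ne.symm hne), zero_mul]
        · intro hnm
          exact absurd (Finset.mem_univ _) hnm
      simp_rw [hj]
      rw [← Finset.mul_sum]
    · simp [h]
  simp_rw [inner_eq]
  rw [Fintype.sum_prod_type]
  have hi : ∀ i : Fin n, (∑ i' : Fin n, star (w (i, i')) *
      (if i = i' then (1/n : ℂ) * ∑ j, v (j, j) else 0))
        = star (w (i, i)) * ((1/n : ℂ) * ∑ j, v (j, j)) := by
    intro i
    rw [Finset.sum_eq_single i]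
    · rw [if_pos rfl]
    · intro i' _ hne
      rw [if_neg (Ne.symm hne), mul_zero]
    · intro hnm
      exact absurd (Finset.mem_univ _) hnm
  simp_rw [hi]
  rw [← Finset.sum_mul, ← star_sum]
  ring

/-- the k-th operator norm of the maximally entangled projection
`E = (1/n) Σ_{i,j} |e_i⟩⟨e_j| ⊗ |e_i⟩⟨e_j|` equals `k/n`. -/
theorem stmt4 {n k : ℕ} (hk1 : 1 ≤ k) (hkn : k ≤ n) :
    opNorm k (Matrix.of fun p q : Fin n × Fin n =>
      if p.1 = p.2 ∧ q.1 = q.2 then (1 : ℂ) / n else 0) = (k : ℝ) / n := by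
  classical
  have hn : 0 < n := lt_of_lt_of_le hk1 hkn
  have hk0 : (0:ℝ) < k := by exact_mod_cast hk1
  have hkC : ((k:ℂ)) ≠ 0 := by exact_mod_cast hk0.ne'
  -- the witness vector
  set cc : ℂ := Complex.ofReal ((Real.sqrt k)⁻¹) with hccdef
  set ι : Fin k → Fin n := Fin.castLE hkn with hιdef
  have hιinj : Function.Injective ι := Fin.castLE_injective hkn
  set av : Fin k → Fin n → ℂ := fun t i => if i = ι t then cc else 0 with havdef
  set bv : Fin k → Fin n → ℂ := fun t j => if j = ι t then 1 else 0 with hbvdef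
  set v0 : Fin n × Fin n → ℂ := ∑ t, prodVec (av t) (bv t) with hv0def
  have hSR : SRle k v0 := ⟨av, bv, rfl⟩
  have hccR : ((Real.sqrt k)⁻¹ * (Real.sqrt k)⁻¹ : ℝ) = (k:ℝ)⁻¹ := by
    rw [← mul_inv, Real.mul_self_sqrt hk0.le]
  have hccstar : star cc = cc := by
    simp [hccdef, Complex.star_def, Complex.conj_ofReal]
  have hcc2 : cc * cc = ((k:ℂ))⁻¹ := by
    rw [hccdef, ← Complex.ofReal_mul, hccR]
    push_cast
    ring
  -- delta computations
  have hdelta : ∀ (x y : ℂ) (t t' : Fin k),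
      ip (fun i => if i = ι t then x else 0) (fun i => if i = ι t' then y else 0)
        = if t = t' then star x * y else 0 := by
    intro x y t t'
    simp only [ip]
    by_cases h : t = t'
    · subst h
      rw [if_pos rfl, Finset.sum_eq_single (ι t)]
      · simp
      · intro i _ hne
        simp [if_neg hne]
      · intro hnm
        exact absurd (Finset.mem_univ _) hnm
    · rw [if_neg h]
      refine Finset.sum_eq_zero fun i _ => ?_
      by_cases h1 : i = ι t
      · have h2 : ι t ≠ ι t' := fun hh => h (hιinj hh)
        simp [h1, h2]
      · simp [h1]
  have hav : ∀ t t', ip (av t) (av t') = if t = t' then ((k:ℂ))⁻¹ else 0 := by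
    intro t t'
    rw [havdef]
    rw [hdelta cc cc t t', hccstar, hcc2]
  have hbv : ∀ t t', ip (bv t) (bv t') = if t = t' then 1 else 0 := by
    intro t t'
    rw [hbvdef]
    rw [hdelta 1 1 t t']
    simp
  -- norm of v0
  have hipv0 : ip v0 v0 = 1 := by
    rw [hv0def, ip_sum_left]
    have h6 : ∀ t, ip (prodVec (av t) (bv t)) (∑ t', prodVec (av t') (bv t')) = ((k:ℂ))⁻¹ := by
      intro t
      rw [ip_sum_right]
      have h7 : ∀ t', ip (prodVec (av t) (bv t)) (prodVec (av t') (bv t'))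
          = if t = t' then ((k:ℂ))⁻¹ else 0 := by
        intro t'
        rw [ip_prodVec, hav, hbv]
        by_cases h : t = t' <;> simp [h]
      simp_rw [h7, Finset.sum_ite_eq, Finset.mem_univ, if_pos]
    simp_rw [h6]
    rw [Finset.sum_const, Finset.card_univ, Fintype.card_fin, nsmul_eq_mul]
    field_simp
  have hnrm0 : nrm v0 = 1 := by
    rw [nrm, hipv0]
    simp
  -- trace of v0
  have htr0 : (∑ i, v0 (i, i)) = (k:ℂ) * cc := by
    rw [hv0def]
    simp only [Finset.sum_apply, prodVec]
    rw [Finset.sum_comm]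
    have h8 : ∀ t, (∑ i, av t i * bv t i) = cc := by
      intro t
      rw [havdef, hbvdef]
      rw [Finset.sum_eq_single (ι t)]
      · simp
      · intro i _ hne
        simp [if_neg hne]
      · intro hnm
        exact absurd (Finset.mem_univ _) hnm
    simp_rw [h8]
    rw [Finset.sum_const, Finset.card_univ, Fintype.card_fin, nsmul_eq_mul]
  -- value at the witness
  have hval : ‖ip v0 ((Matrix.of fun p q : Fin n × Fin n =>
      if p.1 = p.2 ∧ q.1 = q.2 then (1 : ℂ) / n else 0).mulVec v0)‖ = (k:ℝ)/n := by
    rw [hform, htr0]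
    have hs : star ((k:ℂ) * cc) = (k:ℂ) * cc := by
      rw [star_mul', hccstar]
      simp [mul_comm]
    rw [hs]
    have h9 : (1 / (n:ℂ)) * ((k:ℂ) * cc) * ((k:ℂ) * cc) = (k:ℂ) / n := by
      calc (1 / (n:ℂ)) * ((k:ℂ) * cc) * ((k:ℂ) * cc)
          = (1 / (n:ℂ)) * (k:ℂ) * ((k:ℂ) * (cc * cc)) := by ring
        _ = (1 / (n:ℂ)) * (k:ℂ) * ((k:ℂ) * ((k:ℂ))⁻¹) := by rw [hcc2]
        _ = (k:ℂ) / n := by rw [mul_inv_cancel₀ hkC]; ring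
    rw [h9]
    rw [norm_div]
    simp
  -- conclusion
  unfold opNorm
  apply IsGreatest.csSup_eq
  constructor
  · exact ⟨v0, v0, hnrm0, hnrm0, hSR, hSR, hval.symm⟩
  · rintro r ⟨v, w, hv1, hw1, hvS, hwS, rfl⟩
    rw [hform, norm_mul, norm_mul]
    have h1 : ‖(1:ℂ)/n‖ = 1/(n:ℝ) := by
      rw [norm_div]
      simp
    have h2 : ‖star (∑ i, w (i, i))‖ ≤ Real.sqrt k := by
      rw [norm_star]
      have := trace_bound w hwS
      rwa [hw1, mul_one] at this
    have h3 : ‖∑ j, v (j, j)‖ ≤ Real.sqrt k := by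
      have := trace_bound v hvS
      rwa [hv1, mul_one] at this
    rw [h1]
    calc (1/(n:ℝ)) * ‖star (∑ i, w (i, i))‖ * ‖∑ j, v (j, j)‖
        ≤ (1/(n:ℝ)) * Real.sqrt k * Real.sqrt k := by
          apply mul_le_mul _ h3 (norm_nonneg _) (by positivity)
          exact mul_le_mul_of_nonneg_left h2 (by positivity)
      _ = (k:ℝ)/n := by
          rw [mul_assoc, Real.mul_self_sqrt hk0.le]
          ring
end
end

section
/- Let X = X* ∈ L(H_n ⊗ H_m) be Hermitian with negative part X⁻ and projections P_X⁰, P_X⁻ onto its kernel and negative eigenspace respectively. If ‖P_X⁰ + P_X⁻‖_{S(k)} < 1 and every positive eigenvalue λ_i⁺ of X satisfies λ_i⁺ ≥ ‖X⁻‖_{S(k)} / (1 − ‖P_X⁰ + P_X⁻‖_{S(k)}), then X is k-block positive. -/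
noncomputable section
open scoped BigOperators

variable {ι : Type*} [Fintype ι]

lemma ip_sum_right_s16 {α : Type*} (u : ι → ℂ) (S : Finset α) (f : α → ι → ℂ) :
    ip u (∑ i ∈ S, f i) = ∑ i ∈ S, ip u (f i) := by
  simp only [ip, Finset.sum_apply, Finset.mul_sum]
  exact Finset.sum_comm

lemma ip_smul_right (u x : ι → ℂ) (z : ℂ) : ip u (z • x) = z * ip u x := by
  simp only [ip, Pi.smul_apply, smul_eq_mul, Finset.mul_sum]
  exact Finset.sum_congr rfl fun p _ => by ring

lemma ip_conj (u w : ι → ℂ) : ip u w = star (ip w u) := by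
  simp only [ip, star_sum, star_mul', star_star]
  exact Finset.sum_congr rfl fun p _ => by ring

lemma outer_mulVec (w x u : ι → ℂ) : (outer w x).mulVec u = (ip x u) • w := by
  funext p
  simp only [Matrix.mulVec, dotProduct, outer, Matrix.of_apply, Pi.smul_apply,
    smul_eq_mul, ip, Finset.sum_mul]
  exact Finset.sum_congr rfl fun q _ => by ring

lemma mul_outer (X : Matrix ι ι ℂ) (w x : ι → ℂ) [DecidableEq ι] :
    X * outer w x = outer (X.mulVec w) x := by
  ext p q
  simp only [Matrix.mul_apply, outer, Matrix.of_apply, Matrix.mulVec, dotProduct,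
    Finset.sum_mul]
  exact Finset.sum_congr rfl fun r _ => by ring

lemma ip_self_nonneg (u : ι → ℂ) : 0 ≤ (ip u u).re := by
  simp only [ip, Complex.re_sum]
  refine Finset.sum_nonneg fun p _ => ?_
  rw [show star (u p) = starRingEnd ℂ (u p) from rfl, mul_comm, Complex.mul_conj]
  simpa using Complex.normSq_nonneg (u p)

lemma nrm_one_ip {u : ι → ℂ} (hu : nrm u = 1) : (ip u u).re = 1 := by
  have := hu
  unfold nrm at this
  nlinarith [Real.sq_sqrt (ip_self_nonneg u), Real.sqrt_nonneg (ip u u).re]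

lemma nrm_one_entry_le {u : ι → ℂ} (hu : nrm u = 1) (p : ι) : ‖u p‖ ≤ 1 := by
  have hsum : ∑ q, Complex.normSq (u q) = 1 := by
    rw [← nrm_one_ip hu]
    simp only [ip, Complex.re_sum]
    exact Finset.sum_congr rfl fun q _ => by
      rw [show star (u q) = starRingEnd ℂ (u q) from rfl, mul_comm, Complex.mul_conj]
      simp
  have h2 : Complex.normSq (u p) ≤ 1 := by
    rw [← hsum]
    exact Finset.single_le_sum (fun q _ => Complex.normSq_nonneg _) (Finset.mem_univ p)
  have := Complex.sq_norm (u p)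
  nlinarith [norm_nonneg (u p)]

lemma sum_mulVec' {α : Type*} (S : Finset α) (f : α → Matrix ι ι ℂ) (u : ι → ℂ) :
    (∑ i ∈ S, f i).mulVec u = ∑ i ∈ S, (f i).mulVec u := by
  funext p
  simp only [Matrix.mulVec, dotProduct, Finset.sum_apply, Matrix.sum_apply,
    Finset.sum_mul]
  exact Finset.sum_comm

lemma completeness [DecidableEq ι] (v : ι → ι → ℂ)
    (horth : ∀ i j, ip (v i) (v j) = if i = j then 1 else 0) :
    ∑ j, outer (v j) (v j) = (1 : Matrix ι ι ℂ) := by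
  let M : Matrix ι ι ℂ := Matrix.of fun p j => v j p
  have h1 : M.conjTranspose * M = 1 := by
    ext i j
    have := horth i j
    simp only [ip] at this
    simpa [Matrix.mul_apply, Matrix.conjTranspose_apply, M, Matrix.one_apply] using this
  have h2 : M * M.conjTranspose = 1 := mul_eq_one_comm.mp h1
  ext p q
  have h3 := congrArg (fun A : Matrix ι ι ℂ => A p q) h2
  simp only [Matrix.mul_apply, Matrix.conjTranspose_apply, M, Matrix.of_apply] at h3
  simpa [Matrix.sum_apply, outer] using h3

lemma opNorm_set_bddAbove {n m k : ℕ} (Y : Matrix (Fin n × Fin m) (Fin n × Fin m) ℂ) :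
    BddAbove {r | ∃ v w, nrm v = 1 ∧ nrm w = 1 ∧ SRle k v ∧ SRle k w ∧
      r = ‖ip w (Y.mulVec v)‖} := by
  refine ⟨∑ p, ∑ q, ‖Y p q‖, ?_⟩
  rintro r ⟨v, w, hv, hw, -, -, rfl⟩
  refine le_trans (norm_sum_le _ _) ?_
  refine Finset.sum_le_sum fun p _ => ?_
  rw [norm_mul]
  have h1 : ‖star (w p)‖ ≤ 1 := by
    rw [show star (w p) = starRingEnd ℂ (w p) from rfl, Complex.norm_conj]
    exact nrm_one_entry_le hw p
  have h2 : ‖Y.mulVec v p‖ ≤ ∑ q, ‖Y p q‖ := by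
    refine le_trans (norm_sum_le _ _) (Finset.sum_le_sum fun q _ => ?_)
    rw [norm_mul]
    exact mul_le_of_le_one_right (norm_nonneg _) (nrm_one_entry_le hv q)
  calc ‖star (w p)‖ * ‖Y.mulVec v p‖
      ≤ 1 * (∑ q, ‖Y p q‖) :=
        mul_le_mul h1 h2 (norm_nonneg _) zero_le_one
    _ = ∑ q, ‖Y p q‖ := one_mul _
/-- sufficient spectral condition for k-block positivity
(condition (2) of Theorem 4.1). -/
theorem stmt16 {n m k : ℕ} (hmn : m ≤ n) (hk1 : 1 ≤ k) (hkm : k ≤ m)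
    (X : Matrix (Fin n × Fin m) (Fin n × Fin m) ℂ) (hX : X.IsHermitian)
    (μ : Fin n × Fin m → ℝ) (v : Fin n × Fin m → Fin n × Fin m → ℂ)
    (horth : ∀ i j, ip (v i) (v j) = if i = j then 1 else 0)
    (heig : ∀ i, X.mulVec (v i) = (μ i : ℂ) • v i)
    -- |X⁻| : the absolute value of the negative part of X
    (Xnegabs : Matrix (Fin n × Fin m) (Fin n × Fin m) ℂ)
    (hXnegabs : Xnegabs =
      ∑ i ∈ Finset.univ.filter (fun i => μ i < 0), ((-μ i : ℝ) : ℂ) • outer (v i) (v i))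
    -- P_X⁰ + P_X⁻ : projection onto the kernel plus negative eigenspace
    (P0neg : Matrix (Fin n × Fin m) (Fin n × Fin m) ℂ)
    (hP0neg : P0neg = ∑ i ∈ Finset.univ.filter (fun i => μ i ≤ 0), outer (v i) (v i))
    (hlt : opNorm k P0neg < 1)
    (hpos : ∀ i, 0 < μ i → opNorm k Xnegabs / (1 - opNorm k P0neg) ≤ μ i) :
    BlockPos k X := by

  classical
  intro u hu hSR
  set a := opNorm k Xnegabs with ha
  set p := opNorm k P0neg with hp
  have hcomp := completeness v horth
  have hq0 : ∀ i, 0 ≤ Complex.normSq (ip (v i) u) := fun i => Complex.normSq_nonneg _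
  -- key computation
  have term : ∀ (i : Fin n × Fin m) (t : ℝ),
      ip u (((t : ℂ) • outer (v i) (v i)).mulVec u)
        = ((t * Complex.normSq (ip (v i) u) : ℝ) : ℂ) := by
    intro i t
    rw [Matrix.smul_mulVec, outer_mulVec, ip_smul_right, ip_smul_right,
      ip_conj u (v i),
      show star (ip (v i) u) = starRingEnd ℂ (ip (v i) u) from rfl]
    rw [Complex.mul_conj]
    push_cast
    ring
  
  have key : ∀ (S : Finset (Fin n × Fin m)) (t : Fin n × Fin m → ℝ),
      ip u ((∑ i ∈ S, (t i : ℂ) • outer (v i) (v i)).mulVec u)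
        = ((∑ i ∈ S, t i * Complex.normSq (ip (v i) u) : ℝ) : ℂ) := by
    intro S t
    rw [sum_mulVec', ip_sum_right_s16, Complex.ofReal_sum]
    exact Finset.sum_congr rfl fun i _ => term i (t i)
  -- X as spectral sum
  have hXeq : X = ∑ i, ((μ i : ℝ) : ℂ) • outer (v i) (v i) := by
    calc X = X * 1 := (mul_one X).symm
      _ = X * ∑ j, outer (v j) (v j) := by rw [hcomp]
      _ = ∑ j, X * outer (v j) (v j) := Finset.mul_sum _ _ _
      _ = ∑ j, ((μ j : ℝ) : ℂ) • outer (v j) (v j) := by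
          refine Finset.sum_congr rfl fun j _ => ?_
          rw [mul_outer, heig j]
          ext p' q'
          simp [outer, smul_eq_mul, mul_assoc]
  -- Parseval
  have hParse : (∑ i, Complex.normSq (ip (v i) u)) = 1 := by
    have h1 : ip u u = ((∑ i, (1:ℝ) * Complex.normSq (ip (v i) u) : ℝ) : ℂ) := by
      rw [show ip u u = ip u ((1 : Matrix (Fin n × Fin m) (Fin n × Fin m) ℂ).mulVec u) by
            rw [Matrix.one_mulVec],
          ← hcomp,
          show (∑ j, outer (v j) (v j)) = ∑ j, ((1:ℝ):ℂ) • outer (v j) (v j) by simp]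
      exact key Finset.univ (fun _ => 1)
    have h2 := nrm_one_ip hu
    rw [h1] at h2
    simpa using h2
  -- bound from P0neg
  set s := ∑ i ∈ Finset.univ.filter (fun i => μ i ≤ 0), Complex.normSq (ip (v i) u) with hs
  have hs0 : 0 ≤ s := Finset.sum_nonneg fun i _ => hq0 i
  have hipP : ip u (P0neg.mulVec u) = ((s : ℝ) : ℂ) := by
    rw [hP0neg,
      show (∑ i ∈ Finset.univ.filter (fun i => μ i ≤ 0), outer (v i) (v i))
        = ∑ i ∈ Finset.univ.filter (fun i => μ i ≤ 0), ((1:ℝ):ℂ) • outer (v i) (v i) by simp,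
      key]
    norm_num [hs]
  have hsle : s ≤ p := by
    rw [hp, opNorm]
    refine le_csSup (opNorm_set_bddAbove _) ⟨u, u, hu, hu, hSR, hSR, ?_⟩
    rw [hipP, Complex.norm_real, Real.norm_eq_abs, abs_of_nonneg hs0]
  -- bound from Xnegabs
  set tv := ∑ i ∈ Finset.univ.filter (fun i => μ i < 0), (-μ i) * Complex.normSq (ip (v i) u)
    with htv
  have htv0 : 0 ≤ tv := Finset.sum_nonneg fun i hi => by
    have : μ i < 0 := (Finset.mem_filter.mp hi).2
    have := hq0 i
    nlinarith
  have hipN : ip u (Xnegabs.mulVec u) = ((tv : ℝ) : ℂ) := by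
    rw [hXnegabs, key]
  have htvle : tv ≤ a := by
    rw [ha, opNorm]
    refine le_csSup (opNorm_set_bddAbove _) ⟨u, u, hu, hu, hSR, hSR, ?_⟩
    rw [hipN, Complex.norm_real, Real.norm_eq_abs, abs_of_nonneg htv0]
  -- rewrite goal
  have hgoal : (ip u (X.mulVec u)).re = ∑ i, μ i * Complex.normSq (ip (v i) u) := by
    rw [hXeq, key]
    exact Complex.ofReal_re _
  rw [hgoal]
  -- arithmetic
  have hS0 : Finset.univ.filter (fun i => ¬ 0 < μ i) = Finset.univ.filter (fun i => μ i ≤ 0) := by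
    simp [not_lt]
  have hsplit := Finset.sum_filter_add_sum_filter_not Finset.univ (fun i => 0 < μ i)
    (fun i => μ i * Complex.normSq (ip (v i) u))
  have hsplitq := Finset.sum_filter_add_sum_filter_not Finset.univ (fun i => 0 < μ i)
    (fun i => Complex.normSq (ip (v i) u))
  rw [hS0] at hsplit hsplitq
  -- negative part equals -tv
  have hneg : ∑ i ∈ Finset.univ.filter (fun i => μ i ≤ 0), μ i * Complex.normSq (ip (v i) u)
      = - tv := by
    have hsub : Finset.univ.filter (fun i => μ i < 0) ⊆ Finset.univ.filter (fun i => μ i ≤ 0) :=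
      fun i hi => Finset.mem_filter.mpr ⟨Finset.mem_univ i, le_of_lt (Finset.mem_filter.mp hi).2⟩
    have h1 : ∑ i ∈ Finset.univ.filter (fun i => μ i ≤ 0), μ i * Complex.normSq (ip (v i) u)
        = ∑ i ∈ Finset.univ.filter (fun i => μ i < 0), μ i * Complex.normSq (ip (v i) u) := by
      refine (Finset.sum_subset hsub fun i hi hni => ?_).symm
      have h2 : ¬ μ i < 0 := by
        intro hc
        exact hni (Finset.mem_filter.mpr ⟨Finset.mem_univ i, hc⟩)
      have : μ i = 0 := le_antisymm (Finset.mem_filter.mp hi).2 (not_lt.mp h2)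
      simp [this]
    rw [h1, htv, ← Finset.sum_neg_distrib]
    exact Finset.sum_congr rfl fun i _ => by ring
  -- positive part lower bound
  have hq1 : ∑ i ∈ Finset.univ.filter (fun i => 0 < μ i), Complex.normSq (ip (v i) u) = 1 - s := by
    rw [← hs] at hsplitq
    linarith [hsplitq.trans hParse]
  have hposlb : (a / (1 - p)) * (1 - s)
      ≤ ∑ i ∈ Finset.univ.filter (fun i => 0 < μ i), μ i * Complex.normSq (ip (v i) u) := by
    rw [← hq1, Finset.mul_sum]
    refine Finset.sum_le_sum fun i hi => ?_
    have hμ : 0 < μ i := (Finset.mem_filter.mp hi).2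
    exact mul_le_mul_of_nonneg_right (hpos i hμ) (hq0 i)
  have h1p : 0 < 1 - p := by linarith
  have ha0 : 0 ≤ a := le_trans htv0 htvle
  have hdn : 0 ≤ a / (1 - p) := div_nonneg ha0 h1p.le
  have hdiv : a / (1 - p) * (1 - p) = a := div_mul_cancel₀ a h1p.ne'
  have hkey : a / (1 - p) * (1 - p) ≤ a / (1 - p) * (1 - s) :=
    mul_le_mul_of_nonneg_left (by linarith) hdn
  rw [hneg] at hsplit
  linarith
end
end
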